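/- For each integer d ≥ 2 and fixed i with 0 ≤ i ≤ d-1, the function s ↦ s^i (1-s)^{n-i} on [0,1] attains its maximum at s = i/n (for n ≥ i ≥ 1), and for n ≥ 2d and c ≥ d with c/n ≥ i/n one has C(n,i)(c/n)^i (1-c/n)^{n-i} ≤ c^d e^{-c/2}; hence Σ_{i=0}^{d-1} C(n,i)(c/n)^i(1-c/n)^{n-i} ≤ d·c^d·e^{-c/2}. -/

import Mathlib

/-- AM-GM max lemma: for 1 ≤ i ≤ n, s ∈ [0,1],
`s^i (1-s)^{n-i} ≤ (i/n)^i (1-i/n)^{n-i}`. -/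
lemma aux_max (n i : ℕ) (hi1 : 1 ≤ i) (hin : i ≤ n) (s : ℝ) (hs0 : 0 ≤ s) (hs1 : s ≤ 1) :
    s ^ i * (1 - s) ^ (n - i) ≤ ((i : ℝ) / n) ^ i * (1 - (i : ℝ) / n) ^ (n - i) := by
  have hn1 : 1 ≤ n := le_trans hi1 hin
  have hn0 : (0:ℝ) < n := by exact_mod_cast Nat.pos_of_ne_zero (by omega)
  rcases eq_or_lt_of_le hin with h | h
  · -- i = n
    subst h
    simp only [Nat.sub_self, pow_zero, mul_one, div_self hn0.ne']
    rw [one_pow]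
    exact pow_le_one₀ hs0 hs1
  · -- i < n
    have hi0 : (0:ℝ) < i := by exact_mod_cast hi1
    have hni0 : (0:ℝ) < ((n - i : ℕ) : ℝ) := by exact_mod_cast Nat.sub_pos_of_lt h
    have ha0 : (0:ℝ) < (i:ℝ)/n := by positivity
    have hb0 : (0:ℝ) < ((n - i : ℕ) : ℝ)/n := by positivity
    have hab : (i:ℝ)/n + ((n - i : ℕ) : ℝ)/n = 1 := by
      rw [← add_div, div_eq_one_iff_eq hn0.ne']
      push_cast [hin]
      ring
    have h1a : 1 - (i:ℝ)/n = ((n - i : ℕ) : ℝ)/n := by linarith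
    rw [h1a]
    have hp₁0 : 0 ≤ s / ((i:ℝ)/n) := by positivity
    have hp₂0 : 0 ≤ (1 - s) / (((n - i : ℕ) : ℝ)/n) := div_nonneg (by linarith) hb0.le
    have key : (s / ((i:ℝ)/n)) ^ ((i:ℝ)/n) *
        ((1 - s) / (((n - i : ℕ) : ℝ)/n)) ^ (((n - i : ℕ) : ℝ)/n) ≤ 1 := by
      calc _ ≤ (i:ℝ)/n * (s / ((i:ℝ)/n)) +
            ((n - i : ℕ) : ℝ)/n * ((1 - s) / (((n - i : ℕ) : ℝ)/n)) :=
            Real.geom_mean_le_arith_mean2_weighted ha0.le hb0.le hp₁0 hp₂0 hab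
        _ = s + (1 - s) := by
            have hsub : ((n:ℝ) - i) ≠ 0 := by
              push_cast [hin] at hni0; linarith
            field_simp
        _ = 1 := by ring
    have key2 : (s / ((i:ℝ)/n)) ^ i * ((1 - s) / (((n - i : ℕ) : ℝ)/n)) ^ (n - i) ≤ 1 := by
      have hpow := Real.rpow_le_rpow (by positivity) key (le_of_lt hn0)
      rw [Real.one_rpow,
        Real.mul_rpow (Real.rpow_nonneg hp₁0 _) (Real.rpow_nonneg hp₂0 _),
        ← Real.rpow_mul hp₁0, ← Real.rpow_mul hp₂0] at hpow
      have e1 : (i:ℝ)/n * n = (i : ℝ) := by field_simp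
      have e2 : ((n - i : ℕ) : ℝ)/n * n = ((n - i : ℕ) : ℝ) := by field_simp
      rw [e1, e2, Real.rpow_natCast, Real.rpow_natCast] at hpow
      exact hpow
    rw [div_pow s, div_pow (1-s), div_mul_div_comm, div_le_one (by positivity)] at key2
    linarith

theorem stmt_19 (d : ℕ) (hd : 2 ≤ d) :
    (∀ n i : ℕ, 1 ≤ i → i ≤ d - 1 → i ≤ n → ∀ s ∈ Set.Icc (0 : ℝ) 1,
      s ^ i * (1 - s) ^ (n - i) ≤
        ((i : ℝ) / n) ^ i * (1 - (i : ℝ) / n) ^ (n - i)) ∧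
    (∀ n : ℕ, ∀ c : ℝ, 2 * d ≤ n → (d : ℝ) ≤ c → c ≤ n →
      (∀ i : ℕ, i ≤ d - 1 →
        (n.choose i : ℝ) * (c / n) ^ i * (1 - c / n) ^ (n - i) ≤
          c ^ d * Real.exp (-c / 2)) ∧
      ∑ i ∈ Finset.range d,
          (n.choose i : ℝ) * (c / n) ^ i * (1 - c / n) ^ (n - i) ≤
        (d : ℝ) * c ^ d * Real.exp (-c / 2)) := by
  constructor
  · intro n i hi1 _ hin s hs
    exact aux_max n i hi1 hin s hs.1 hs.2
  · intro n c hn hdc hcn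
    have hn0 : (0:ℝ) < n := by
      exact_mod_cast Nat.pos_of_ne_zero (by omega)
    have hd2 : (2:ℝ) ≤ (d:ℝ) := by exact_mod_cast hd
    have hc1 : (1:ℝ) ≤ c := by linarith
    have hc0 : (0:ℝ) ≤ c := by linarith
    have hcn1 : c / n ≤ 1 := (div_le_one hn0).mpr hcn
    have hb0 : 0 ≤ 1 - c / n := by linarith
    have key : ∀ i : ℕ, i ≤ d - 1 →
        (n.choose i : ℝ) * (c / n) ^ i * (1 - c / n) ^ (n - i) ≤
          c ^ d * Real.exp (-c / 2) := by
      intro i hi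
      have hid : i < d := by omega
      have hin : i ≤ n := by omega
      have hA : (n.choose i : ℝ) * (c / n) ^ i ≤ c ^ d := by
        have h1 : (n.choose i : ℝ) ≤ (n:ℝ) ^ i := by exact_mod_cast Nat.choose_le_pow n i
        have h2 : (n.choose i : ℝ) * (c / n) ^ i ≤ (n:ℝ) ^ i * (c / n) ^ i :=
          mul_le_mul_of_nonneg_right h1 (by positivity)
        have h3 : (n:ℝ) ^ i * (c / n) ^ i = c ^ i := by
          rw [← mul_pow]
          congr 1
          field_simp
        rw [h3] at h2
        exact h2.trans (pow_le_pow_right₀ hc1 hid.le)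
      have hB : (1 - c / n) ^ (n - i) ≤ Real.exp (-c / 2) := by
        have hbase : 1 - c / n ≤ Real.exp (-(c/n)) := by
          have := Real.add_one_le_exp (-(c/n)); linarith
        calc (1 - c / n) ^ (n - i) ≤ Real.exp (-(c/n)) ^ (n - i) :=
              pow_le_pow_left₀ hb0 hbase _
          _ = Real.exp (((n - i : ℕ):ℝ) * (-(c/n))) := by rw [← Real.exp_nat_mul]
          _ ≤ Real.exp (-c / 2) := by
              apply Real.exp_le_exp.mpr
              have hcast : ((n - i : ℕ) : ℝ) = (n:ℝ) - i := by push_cast [hin]; ring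
              have h2i : (2 * i : ℝ) + 2 ≤ (n:ℝ) := by exact_mod_cast (by omega : 2 * i + 2 ≤ n)
              rw [hcast]
              rw [mul_neg, neg_le, neg_div, neg_neg, mul_div_assoc']
              rw [div_le_div_iff₀ (by norm_num : (0:ℝ) < 2) hn0]
              nlinarith [mul_le_mul_of_nonneg_left (by linarith : (n:ℝ) ≤ 2 * ((n:ℝ) - i)) hc0]
      exact mul_le_mul hA hB (by positivity) (by positivity)
    refine ⟨key, ?_⟩
    calc ∑ i ∈ Finset.range d, (n.choose i : ℝ) * (c / n) ^ i * (1 - c / n) ^ (n - i)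
        ≤ ∑ _i ∈ Finset.range d, c ^ d * Real.exp (-c / 2) := by
          apply Finset.sum_le_sum
          intro i hi
          exact key i (by simp only [Finset.mem_range] at hi; omega)
      _ = (d : ℝ) * c ^ d * Real.exp (-c / 2) := by
          rw [Finset.sum_const, Finset.card_range, nsmul_eq_mul]; ring
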